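/- Let Ω be a nonempty finite type, let p : Ω → ℝ be strictly positive weights with ∑_{ω} p(ω) = 1, and let g : Ω → ℝ. For each m ∈ (0,1) let e(m) ∈ ℝ be a global minimizer over ℝ of the weighted expectile loss L_m(x) = ∑_{ω} p(ω)·w_ω(x)·(g(ω) − x)², where w_ω(x) = 1−m if g(ω) − x < 0 and w_ω(x) = m otherwise. Then e(m) tends to max_{ω} g(ω) as m tends to 1 from the left. -/
import Mathlib


open Finset Filter Topology

/-- Weighted (expectation) form: the m-expectile converges to the in-distribution
maximum as m → 1⁻. -/
theorem weighted_expectile_tendsto_max (Ω : Type*) [Fintype Ω] [Nonempty Ω]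
    (p : Ω → ℝ) (hp : ∀ ω, 0 < p ω) (hsum : ∑ ω, p ω = 1) (g : Ω → ℝ) (e : ℝ → ℝ)
    (he : ∀ m ∈ Set.Ioo (0 : ℝ) 1, ∀ x : ℝ,
      (∑ ω, p ω * ((if g ω - e m < 0 then 1 - m else m) * (g ω - e m) ^ 2)) ≤
        ∑ ω, p ω * ((if g ω - x < 0 then 1 - m else m) * (g ω - x) ^ 2)) :
    Tendsto e (nhdsWithin 1 (Set.Iio 1))
      (nhds (Finset.univ.sup' Finset.univ_nonempty g)) := by
  set M : ℝ := Finset.univ.sup' Finset.univ_nonempty g with hMdef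
  obtain ⟨ω₀, -, hω₀⟩ := Finset.exists_mem_eq_sup' Finset.univ_nonempty g
  have hgω₀ : g ω₀ = M := hω₀.symm
  have hgle : ∀ ω, g ω ≤ M := fun ω => Finset.le_sup' g (Finset.mem_univ ω)
  set C : ℝ := ∑ ω, p ω * (g ω - M) ^ 2 with hCdef
  have hC0 : 0 ≤ C := Finset.sum_nonneg fun ω _ => mul_nonneg (hp ω).le (sq_nonneg _)
  -- Step A: e m ≤ M for m ∈ (0,1)
  have hle : ∀ m ∈ Set.Ioo (0 : ℝ) 1, e m ≤ M := by
    intro m hm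
    by_contra h
    push_neg at h
    have hm1 : 0 < 1 - m := by linarith [hm.2]
    have hlt := he m hm M
    have hstrict : (∑ ω, p ω * ((if g ω - M < 0 then 1 - m else m) * (g ω - M) ^ 2)) <
        ∑ ω, p ω * ((if g ω - e m < 0 then 1 - m else m) * (g ω - e m) ^ 2) := by
      apply Finset.sum_lt_sum
      · intro ω _
        have h1 : g ω - e m < 0 := by linarith [hgle ω]
        rw [if_pos h1]
        by_cases h2 : g ω - M < 0
        · rw [if_pos h2]
          have hsq : (g ω - M) ^ 2 ≤ (g ω - e m) ^ 2 := by nlinarith [hgle ω]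
          exact mul_le_mul_of_nonneg_left
            (mul_le_mul_of_nonneg_left hsq hm1.le) (hp ω).le
        · rw [if_neg h2]
          have h0 : g ω - M = 0 := le_antisymm (by linarith [hgle ω]) (by linarith)
          rw [h0]
          calc p ω * (m * (0:ℝ) ^ 2) = 0 := by ring
            _ ≤ _ := mul_nonneg (hp ω).le (mul_nonneg hm1.le (sq_nonneg _))
      · refine ⟨ω₀, Finset.mem_univ _, ?_⟩
        have h1 : g ω₀ - e m < 0 := by rw [hgω₀]; linarith
        have h2 : ¬ (g ω₀ - M < 0) := by rw [hgω₀]; simp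
        rw [if_pos h1, if_neg h2, hgω₀]
        have hpos : 0 < (M - e m) ^ 2 := by nlinarith
        calc p ω₀ * (m * (M - M) ^ 2) = 0 := by ring
          _ < _ := mul_pos (hp ω₀) (mul_pos hm1 hpos)
    linarith
  -- Step B: the key quantitative bound
  have key : ∀ m ∈ Set.Ioo (0 : ℝ) 1, m * p ω₀ * (M - e m) ^ 2 ≤ (1 - m) * C := by
    intro m hm
    have h1 : (∑ ω, p ω * ((if g ω - M < 0 then 1 - m else m) * (g ω - M) ^ 2)) ≤
        (1 - m) * C := by
      rw [hCdef, Finset.mul_sum]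
      apply Finset.sum_le_sum
      intro ω _
      by_cases h2 : g ω - M < 0
      · rw [if_pos h2]
        exact le_of_eq (by ring)
      · have h0 : g ω - M = 0 := le_antisymm (by linarith [hgle ω]) (by linarith)
        rw [h0]
        simp
    have h2 : m * p ω₀ * (M - e m) ^ 2 ≤
        ∑ ω, p ω * ((if g ω - e m < 0 then 1 - m else m) * (g ω - e m) ^ 2) := by
      have hterm : m * p ω₀ * (M - e m) ^ 2 =
          p ω₀ * ((if g ω₀ - e m < 0 then 1 - m else m) * (g ω₀ - e m) ^ 2) := by
        have h3 : ¬ (g ω₀ - e m < 0) := by rw [hgω₀]; linarith [hle m hm]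
        rw [if_neg h3, hgω₀]
        ring
      rw [hterm]
      refine Finset.single_le_sum (f := fun ω =>
        p ω * ((if g ω - e m < 0 then 1 - m else m) * (g ω - e m) ^ 2))
        (fun ω _ => ?_) (Finset.mem_univ ω₀)
      have hw : (0:ℝ) ≤ (if g ω - e m < 0 then 1 - m else m) := by
        split <;> linarith [hm.1, hm.2]
      exact mul_nonneg (hp ω).le (mul_nonneg hw (sq_nonneg _))
    calc m * p ω₀ * (M - e m) ^ 2 ≤ _ := h2
      _ ≤ _ := he m hm M
      _ ≤ (1 - m) * C := h1
  -- Final: convergence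
  rw [Metric.tendsto_nhds]
  intro ε hε
  have h3 : Tendsto (fun m : ℝ => (1 - m) * C) (nhdsWithin 1 (Set.Iio 1)) (nhds 0) := by
    have h3' : Tendsto (fun m : ℝ => (1 - m) * C) (nhds 1) (nhds ((1 - 1) * C)) :=
      (((continuous_const.sub continuous_id).mul continuous_const).tendsto 1)
    simpa using h3'.mono_left nhdsWithin_le_nhds
  have h4 : Tendsto (fun m : ℝ => m * p ω₀ * ε ^ 2) (nhdsWithin 1 (Set.Iio 1))
      (nhds (1 * p ω₀ * ε ^ 2)) := by
    have h4' : Tendsto (fun m : ℝ => m * p ω₀ * ε ^ 2) (nhds 1)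
        (nhds (1 * p ω₀ * ε ^ 2)) :=
      (((continuous_id.mul continuous_const).mul continuous_const).tendsto 1)
    exact h4'.mono_left nhdsWithin_le_nhds
  have h5 : ∀ᶠ m in nhdsWithin (1:ℝ) (Set.Iio 1), (1 - m) * C < m * p ω₀ * ε ^ 2 :=
    h3.eventually_lt h4 (mul_pos (mul_pos one_pos (hp ω₀)) (pow_pos hε 2))
  have h6 : Set.Ioo (0:ℝ) 1 ∈ nhdsWithin (1:ℝ) (Set.Iio 1) :=
    Ioo_mem_nhdsLT_of_mem (by constructor <;> norm_num)
  filter_upwards [h5, h6] with m hm5 hm6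
  have hk := key m hm6
  have hlem := hle m hm6
  have hsq : (M - e m) ^ 2 < ε ^ 2 := by nlinarith [hk, hm5, mul_pos hm6.1 (hp ω₀)]
  rw [Real.dist_eq, abs_sub_lt_iff]
  constructor
  · linarith
  · nlinarith
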